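/- Let G be a finite simple graph of order n. Then γ_cer(G) = n if and only if every vertex of G is isolated (degree zero), or is a leaf, or is adjacent to exactly one leaf. (Equivalently, G is the complement of a complete graph, the corona of a graph, or the union of both.) -/

import Mathlib

open Finset

variable {V : Type*} [Fintype V] [DecidableEq V]

/-- `D` is a dominating set of `G`: every vertex outside `D` has a neighbour in `D`. -/
def IsDomSet (G : SimpleGraph V) (D : Finset V) : Prop :=
  ∀ v ∉ D, ∃ u ∈ D, G.Adj u v

/-- `D` is a certified dominating set of `G`: it is dominating and every vertex of `D`
has either zero or at least two neighbours outside `D`. -/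
def IsCertDomSet (G : SimpleGraph V) [DecidableRel G.Adj] (D : Finset V) : Prop :=
  IsDomSet G D ∧ ∀ v ∈ D, (G.neighborFinset v \ D).card = 0 ∨ 2 ≤ (G.neighborFinset v \ D).card

/-- The domination number: minimum cardinality of a dominating set. -/
noncomputable def gamma (G : SimpleGraph V) : ℕ :=
  sInf {n | ∃ D : Finset V, IsDomSet G D ∧ D.card = n}

/-- The certified domination number: minimum cardinality of a certified dominating set. -/
noncomputable def gammaCer (G : SimpleGraph V) [DecidableRel G.Adj] : ℕ :=
  sInf {n | ∃ D : Finset V, IsCertDomSet G D ∧ D.card = n}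

/-- A leaf is a vertex of degree one. -/
abbrev IsLeaf (G : SimpleGraph V) [DecidableRel G.Adj] (v : V) : Prop := G.degree v = 1

/-- The set of leaf-neighbours of a vertex. -/
abbrev leafNbrs (G : SimpleGraph V) [DecidableRel G.Adj] (v : V) : Finset V :=
  (G.neighborFinset v).filter (fun l => G.degree l = 1)

/-- A weak support is a vertex adjacent to exactly one leaf. -/
abbrev IsWeakSupport (G : SimpleGraph V) [DecidableRel G.Adj] (v : V) : Prop :=
  (leafNbrs G v).card = 1

/-- A strong support is a vertex adjacent to at least two leaves. -/
abbrev IsStrongSupport (G : SimpleGraph V) [DecidableRel G.Adj] (v : V) : Prop :=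
  2 ≤ (leafNbrs G v).card

section Aux

variable (G : SimpleGraph V) [DecidableRel G.Adj]

lemma univ_certDomSet : IsCertDomSet G (Finset.univ : Finset V) := by
  constructor
  · intro v hv; exact absurd (mem_univ v) hv
  · intro v _; left; simp

lemma mem_leafNbrs_iff {u x : V} : x ∈ leafNbrs G u ↔ G.Adj u x ∧ G.degree x = 1 := by
  simp [leafNbrs, SimpleGraph.mem_neighborFinset]

lemma degree_pos_of_adj {a b : V} (h : G.Adj a b) : 1 ≤ G.degree b := by
  rw [← SimpleGraph.card_neighborFinset_eq_degree]
  exact Finset.card_pos.mpr ⟨a, (G.mem_neighborFinset b a).mpr h.symm⟩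

lemma eq_of_leaf_adj {l a b : V} (hl : G.degree l = 1) (ha : G.Adj l a) (hb : G.Adj l b) :
    a = b := by
  have hcard : (G.neighborFinset l).card ≤ 1 := by
    rw [SimpleGraph.card_neighborFinset_eq_degree, hl]
  exact Finset.card_le_one.mp hcard a ((G.mem_neighborFinset l a).mpr ha)
    b ((G.mem_neighborFinset l b).mpr hb)

/-- If every vertex is isolated, a leaf, or a weak support, then every certified
dominating set is the whole vertex set. -/
lemma certDomSet_eq_univ (h : ∀ v : V, G.degree v = 0 ∨ IsLeaf G v ∨ IsWeakSupport G v)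
    {D : Finset V} (hD : IsCertDomSet G D) : D = Finset.univ := by
  obtain ⟨hdom, hcert⟩ := hD
  -- every weak support is in D
  have key3 : ∀ w : V, (leafNbrs G w).card = 1 → w ∈ D := by
    intro w hw1
    by_contra hwD
    obtain ⟨l, hl⟩ := Finset.card_pos.mp (by omega : 0 < (leafNbrs G w).card)
    obtain ⟨hadj, hldeg⟩ := (mem_leafNbrs_iff G).mp hl
    have hlD : l ∈ D := by
      by_contra hlD
      obtain ⟨u, huD, huadj⟩ := hdom l hlD
      have : u = w := eq_of_leaf_adj G hldeg huadj.symm hadj.symm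
      exact hwD (this ▸ huD)
    have hwmem : w ∈ G.neighborFinset l \ D :=
      mem_sdiff.mpr ⟨(G.mem_neighborFinset l w).mpr hadj.symm, hwD⟩
    have hle : (G.neighborFinset l \ D).card ≤ 1 := by
      refine le_trans (card_le_card sdiff_subset) ?_
      rw [SimpleGraph.card_neighborFinset_eq_degree, hldeg]
    have hpos : 0 < (G.neighborFinset l \ D).card := Finset.card_pos.mpr ⟨w, hwmem⟩
    rcases hcert l hlD with h0 | h2 <;> omega
  -- every leaf is in D
  have key4 : ∀ l : V, G.degree l = 1 → l ∈ D := by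
    intro l hldeg
    by_contra hlD
    obtain ⟨u, huD, huadj⟩ := hdom l hlD
    have hlmem : l ∈ G.neighborFinset u \ D :=
      mem_sdiff.mpr ⟨(G.mem_neighborFinset u l).mpr huadj, hlD⟩
    rcases h u with h0 | h1 | hwk
    · have := degree_pos_of_adj G huadj.symm
      omega
    · have hle : (G.neighborFinset u \ D).card ≤ 1 := by
        refine le_trans (card_le_card sdiff_subset) ?_
        rw [SimpleGraph.card_neighborFinset_eq_degree, h1]
      have hpos : 0 < (G.neighborFinset u \ D).card := Finset.card_pos.mpr ⟨l, hlmem⟩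
      rcases hcert u huD with h0' | h2' <;> omega
    · have hpos : 0 < (G.neighborFinset u \ D).card := Finset.card_pos.mpr ⟨l, hlmem⟩
      have h2' : 1 < (G.neighborFinset u \ D).card := by
        rcases hcert u huD with h0' | h2' <;> omega
      obtain ⟨w, hwmem, hwl⟩ := Finset.exists_mem_ne h2' l
      obtain ⟨hwN, hwD⟩ := mem_sdiff.mp hwmem
      have hwadj : G.Adj u w := (G.mem_neighborFinset u w).mp hwN
      rcases h w with g0 | g1 | gwk
      · have := degree_pos_of_adj G hwadj
        omega
      · -- both w and l are leaves of u, contradicting weak support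
        have hsub : ({w, l} : Finset V) ⊆ leafNbrs G u := by
          intro x hx
          rcases Finset.mem_insert.mp hx with rfl | hx
          · exact (mem_leafNbrs_iff G).mpr ⟨hwadj, g1⟩
          · rw [Finset.mem_singleton] at hx
            subst hx
            exact (mem_leafNbrs_iff G).mpr ⟨huadj, hldeg⟩
        have := card_le_card hsub
        rw [card_pair hwl] at this
        unfold IsWeakSupport at hwk
        omega
      · exact hwD (key3 w gwk)
  apply Finset.eq_univ_iff_forall.mpr
  intro v
  by_contra hvD
  obtain ⟨u, huD, huadj⟩ := hdom v hvD
  rcases h v with h0 | h1 | hwk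
  · have := degree_pos_of_adj G huadj
    omega
  · exact hvD (key4 v h1)
  · exact hvD (key3 v hwk)

lemma exists_maxIndep (P : Finset V) :
    ∃ J : Finset V, J ⊆ P ∧ (∀ a ∈ J, ∀ b ∈ J, ¬ G.Adj a b) ∧
      ∀ v ∈ P, v ∉ J → ∃ u ∈ J, G.Adj u v := by
  classical
  obtain ⟨J, hJmem, hJmax⟩ := Finset.exists_max_image
    (P.powerset.filter (fun J => ∀ a ∈ J, ∀ b ∈ J, ¬ G.Adj a b)) Finset.card
    ⟨∅, by simp⟩
  rw [mem_filter, mem_powerset] at hJmem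
  refine ⟨J, hJmem.1, hJmem.2, ?_⟩
  intro v hvP hvJ
  by_contra hno
  push_neg at hno
  have hins : insert v J ∈ P.powerset.filter (fun J => ∀ a ∈ J, ∀ b ∈ J, ¬ G.Adj a b) := by
    rw [mem_filter, mem_powerset]
    refine ⟨Finset.insert_subset hvP hJmem.1, ?_⟩
    intro a ha b hb hadj
    rcases Finset.mem_insert.mp ha with ha' | ha' <;>
      rcases Finset.mem_insert.mp hb with hb' | hb'
    · subst ha'; subst hb'; exact G.irrefl hadj
    · subst ha'; exact hno b hb' hadj.symm
    · subst hb'; exact hno a ha' hadj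
    · exact hJmem.2 a ha' b hb' hadj
  have h1 := hJmax _ hins
  have h2 : (insert v J).card = J.card + 1 := Finset.card_insert_of_notMem hvJ
  omega

/-- If some vertex has degree at least two and does not have exactly one leaf-neighbour,
then there is a certified dominating set that is not the whole vertex set. -/
lemma exists_small_certDomSet (v0 : V) (hdeg0 : 2 ≤ G.degree v0)
    (hw0 : (leafNbrs G v0).card ≠ 1) :
    ∃ D : Finset V, IsCertDomSet G D ∧ D.card < Fintype.card V := by
  classical
  set Fr : Finset V := univ.filter (fun v => 2 ≤ G.degree v ∧ leafNbrs G v = ∅) with hFr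
  set Fp : Finset V := Fr.filter
    (fun v => ∀ w ∈ G.neighborFinset v, ¬ (2 ≤ G.degree w ∧ leafNbrs G w ≠ ∅)) with hFp
  obtain ⟨J, hJP, hJind, hJmax⟩ := exists_maxIndep G Fp
  set D : Finset V := univ.filter (fun v =>
    G.degree v = 0 ∨
    (2 ≤ G.degree v ∧ leafNbrs G v ≠ ∅) ∨
    (G.degree v = 1 ∧ ∃ w ∈ G.neighborFinset v, G.degree w = 1) ∨
    (G.degree v = 1 ∧ ∃ w ∈ G.neighborFinset v,
      2 ≤ G.degree w ∧ (leafNbrs G w).card = 1 ∧ G.neighborFinset w ∩ Fr = ∅) ∨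
    v ∈ J) with hD
  have hmemD : ∀ v : V, v ∈ D ↔
      (G.degree v = 0 ∨
      (2 ≤ G.degree v ∧ leafNbrs G v ≠ ∅) ∨
      (G.degree v = 1 ∧ ∃ w ∈ G.neighborFinset v, G.degree w = 1) ∨
      (G.degree v = 1 ∧ ∃ w ∈ G.neighborFinset v,
        2 ≤ G.degree w ∧ (leafNbrs G w).card = 1 ∧ G.neighborFinset w ∩ Fr = ∅) ∨
      v ∈ J) := by
    intro v
    simp only [hD, Finset.mem_filter, Finset.mem_univ, true_and]
  have hFr_mem : ∀ {v : V}, v ∈ Fr ↔ 2 ≤ G.degree v ∧ leafNbrs G v = ∅ := by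
    intro v
    simp only [hFr, Finset.mem_filter, Finset.mem_univ, true_and]
  -- free vertices not in J are outside D
  have hfree_notD : ∀ f : V, 2 ≤ G.degree f → leafNbrs G f = ∅ → f ∉ J → f ∉ D := by
    intro f h2 hlf hfJ hfD
    rcases (hmemD f).mp hfD with h0 | ⟨_, hne⟩ | ⟨h1, _⟩ | ⟨h1, _⟩ | hJ
    · omega
    · exact hne hlf
    · omega
    · omega
    · exact hfJ hJ
  -- a leaf whose support u has deg ≥ 2 and fails the Lx condition is outside D
  have hleaf_notD : ∀ l u : V, G.degree l = 1 → G.Adj u l → 2 ≤ G.degree u →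
      ¬((leafNbrs G u).card = 1 ∧ G.neighborFinset u ∩ Fr = ∅) → l ∉ D := by
    intro l u h1 hadj h2 hnot hlD
    rcases (hmemD l).mp hlD with h0 | ⟨h2', _⟩ | ⟨_, w, hw, hw1⟩ | ⟨_, w, hw, hwrest⟩ | hJ
    · omega
    · omega
    · have : w = u := eq_of_leaf_adj G h1 ((G.mem_neighborFinset l w).mp hw) hadj.symm
      subst this
      omega
    · have : w = u := eq_of_leaf_adj G h1 ((G.mem_neighborFinset l w).mp hw) hadj.symm
      subst this
      exact hnot ⟨hwrest.2.1, hwrest.2.2⟩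
    · have := hFr_mem.mp ((Finset.filter_subset _ _) (by rw [← hFp]; exact hJP hJ))
      omega
  -- neighbours of vertices of Fp are free
  have hnbrFp : ∀ u, u ∈ Fp → ∀ w, G.Adj u w → (2 ≤ G.degree w ∧ leafNbrs G w = ∅) := by
    intro u huFp w hadj
    rw [hFp, Finset.mem_filter] at huFp
    obtain ⟨huFr, hnS⟩ := huFp
    obtain ⟨h2u, hlu⟩ := hFr_mem.mp huFr
    have hw1 : 1 ≤ G.degree w := degree_pos_of_adj G hadj
    have hw2 : 2 ≤ G.degree w := by
      by_contra hc
      have hw1' : G.degree w = 1 := by omega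
      have : w ∈ leafNbrs G u := (mem_leafNbrs_iff G).mpr ⟨hadj, hw1'⟩
      rw [hlu] at this
      simp at this
    have := hnS w ((G.mem_neighborFinset u w).mpr hadj)
    refine ⟨hw2, ?_⟩
    by_contra hne
    exact this ⟨hw2, hne⟩
  -- D is dominating
  have hdomD : IsDomSet G D := by
    intro v hvD
    rcases Nat.lt_or_ge (G.degree v) 1 with h0 | h1
    · exact absurd ((hmemD v).mpr (Or.inl (by omega))) hvD
    rcases Nat.lt_or_ge (G.degree v) 2 with hd1 | hd2
    · -- degree one
      have hdv : G.degree v = 1 := by omega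
      obtain ⟨w, hw⟩ := Finset.card_pos.mp
        (show 0 < (G.neighborFinset v).card by
          rw [SimpleGraph.card_neighborFinset_eq_degree]; omega)
      have hadj : G.Adj v w := (G.mem_neighborFinset v w).mp hw
      by_cases hw1 : G.degree w = 1
      · exact absurd ((hmemD v).mpr (Or.inr (Or.inr (Or.inl ⟨hdv, w, hw, hw1⟩)))) hvD
      · have hw2 : 2 ≤ G.degree w := by
          have := degree_pos_of_adj G hadj
          omega
        refine ⟨w, ?_, hadj.symm⟩
        apply (hmemD w).mpr
        refine Or.inr (Or.inl ⟨hw2, ?_⟩)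
        intro hempty
        have : v ∈ leafNbrs G w := (mem_leafNbrs_iff G).mpr ⟨hadj.symm, hdv⟩
        rw [hempty] at this
        simp at this
    · -- degree at least two
      by_cases hlv : leafNbrs G v = ∅
      · by_cases hS : ∃ w ∈ G.neighborFinset v, 2 ≤ G.degree w ∧ leafNbrs G w ≠ ∅
        · obtain ⟨w, hwmem, hwS⟩ := hS
          exact ⟨w, (hmemD w).mpr (Or.inr (Or.inl hwS)),
            ((G.mem_neighborFinset v w).mp hwmem).symm⟩
        · push_neg at hS
          have hvFp : v ∈ Fp := by
            rw [hFp, Finset.mem_filter]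
            refine ⟨hFr_mem.mpr ⟨hd2, hlv⟩, ?_⟩
            intro w hwmem hcon
            exact hcon.2 (hS w hwmem hcon.1)
          have hvJ : v ∉ J := fun hvJ =>
            hvD ((hmemD v).mpr (Or.inr (Or.inr (Or.inr (Or.inr hvJ)))))
          obtain ⟨u, huJ, huadj⟩ := hJmax v hvFp hvJ
          exact ⟨u, (hmemD u).mpr (Or.inr (Or.inr (Or.inr (Or.inr huJ)))), huadj⟩
      · exact absurd ((hmemD v).mpr (Or.inr (Or.inl ⟨hd2, hlv⟩))) hvD
  -- D is certified
  have hcertD : ∀ v ∈ D,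
      (G.neighborFinset v \ D).card = 0 ∨ 2 ≤ (G.neighborFinset v \ D).card := by
    intro v hvD
    rcases (hmemD v).mp hvD with h0 | ⟨h2, hlne⟩ | ⟨h1, w, hwmem, hw1⟩ |
      ⟨h1, w, hwmem, hw2, hwc, hwF⟩ | hvJ
    · left
      have : G.neighborFinset v = ∅ := Finset.card_eq_zero.mp (by
        rw [SimpleGraph.card_neighborFinset_eq_degree]; exact h0)
      rw [this]
      simp
    · -- v is a support
      obtain ⟨l, hl⟩ := Finset.nonempty_iff_ne_empty.mpr hlne
      obtain ⟨hladj, hldeg⟩ := (mem_leafNbrs_iff G).mp hl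
      by_cases hF : G.neighborFinset v ∩ Fr = ∅
      · -- no free neighbour
        have hsub : G.neighborFinset v \ D ⊆ leafNbrs G v := by
          intro x hx
          obtain ⟨hxN, hxD⟩ := mem_sdiff.mp hx
          have hadjx : G.Adj v x := (G.mem_neighborFinset v x).mp hxN
          have hx1 : 1 ≤ G.degree x := degree_pos_of_adj G hadjx
          rcases Nat.lt_or_ge (G.degree x) 2 with hxd | hxd
          · exact (mem_leafNbrs_iff G).mpr ⟨hadjx, by omega⟩
          · exfalso
            by_cases hxl : leafNbrs G x = ∅
            · have : x ∈ G.neighborFinset v ∩ Fr :=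
                Finset.mem_inter.mpr ⟨hxN, hFr_mem.mpr ⟨hxd, hxl⟩⟩
              rw [hF] at this
              simp at this
            · exact hxD ((hmemD x).mpr (Or.inr (Or.inl ⟨hxd, hxl⟩)))
        by_cases hc1 : (leafNbrs G v).card = 1
        · left
          have hlD : l ∈ D := by
            apply (hmemD l).mpr
            refine Or.inr (Or.inr (Or.inr (Or.inl ⟨hldeg, v,
              (G.mem_neighborFinset l v).mpr hladj.symm, h2, hc1, hF⟩)))
          rw [Finset.card_eq_zero, Finset.eq_empty_iff_forall_notMem]
          intro x hx
          have hxl := hsub hx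
          have hxeq : x = l := Finset.card_le_one.mp (le_of_eq hc1) x hxl l hl
          exact (mem_sdiff.mp hx).2 (hxeq ▸ hlD)
        · right
          have hc2 : 2 ≤ (leafNbrs G v).card := by
            have : 0 < (leafNbrs G v).card := Finset.card_pos.mpr ⟨l, hl⟩
            omega
          refine le_trans hc2 (card_le_card ?_)
          intro x hx
          obtain ⟨hxadj, hx1⟩ := (mem_leafNbrs_iff G).mp hx
          refine mem_sdiff.mpr ⟨(G.mem_neighborFinset v x).mpr hxadj, ?_⟩
          exact hleaf_notD x v hx1 hxadj h2 (fun hcon => hc1 hcon.1)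
      · -- v has a free neighbour f
        right
        obtain ⟨f, hf⟩ := Finset.nonempty_iff_ne_empty.mpr hF
        obtain ⟨hfN, hfFr⟩ := Finset.mem_inter.mp hf
        obtain ⟨hf2, hflf⟩ := hFr_mem.mp hfFr
        have hfadj : G.Adj v f := (G.mem_neighborFinset v f).mp hfN
        have hfJ : f ∉ J := by
          intro hfJ
          have hfFp := hJP hfJ
          rw [hFp, Finset.mem_filter] at hfFp
          exact hfFp.2 v ((G.mem_neighborFinset f v).mpr hfadj.symm) ⟨h2, hlne⟩
        have hfD : f ∉ D := hfree_notD f hf2 hflf hfJ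
        have hlD : l ∉ D := by
          refine hleaf_notD l v hldeg hladj h2 ?_
          intro hcon
          rw [hcon.2] at hf
          simp at hf
        have hlf : l ≠ f := by
          intro hlf
          rw [hlf] at hldeg
          omega
        calc 2 = ({l, f} : Finset V).card := (card_pair hlf).symm
          _ ≤ (G.neighborFinset v \ D).card := by
              refine card_le_card ?_
              intro x hx
              rcases Finset.mem_insert.mp hx with rfl | hx
              · exact mem_sdiff.mpr ⟨(G.mem_neighborFinset v x).mpr hladj, hlD⟩
              · rw [Finset.mem_singleton] at hx
                subst hx
                exact mem_sdiff.mpr ⟨hfN, hfD⟩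
    · -- K2 component
      left
      have hadj : G.Adj v w := (G.mem_neighborFinset v w).mp hwmem
      have hwD : w ∈ D := by
        apply (hmemD w).mpr
        exact Or.inr (Or.inr (Or.inl ⟨hw1, v, (G.mem_neighborFinset w v).mpr hadj.symm, h1⟩))
      rw [Finset.card_eq_zero, Finset.eq_empty_iff_forall_notMem]
      intro x hx
      obtain ⟨hxN, hxD⟩ := mem_sdiff.mp hx
      have : x = w := eq_of_leaf_adj G h1 ((G.mem_neighborFinset v x).mp hxN) hadj
      exact hxD (this ▸ hwD)
    · -- Lx leaf
      left
      have hadj : G.Adj v w := (G.mem_neighborFinset v w).mp hwmem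
      have hwD : w ∈ D := by
        apply (hmemD w).mpr
        refine Or.inr (Or.inl ⟨hw2, ?_⟩)
        intro hempty
        have : v ∈ leafNbrs G w := (mem_leafNbrs_iff G).mpr ⟨hadj.symm, h1⟩
        rw [hempty] at this
        simp at this
      rw [Finset.card_eq_zero, Finset.eq_empty_iff_forall_notMem]
      intro x hx
      obtain ⟨hxN, hxD⟩ := mem_sdiff.mp hx
      have : x = w := eq_of_leaf_adj G h1 ((G.mem_neighborFinset v x).mp hxN) hadj
      exact hxD (this ▸ hwD)
    · -- vertex of J
      right
      have hvFp := hJP hvJ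
      have h2v : 2 ≤ G.degree v := by
        rw [hFp, Finset.mem_filter] at hvFp
        exact (hFr_mem.mp hvFp.1).1
      have hndisj : G.neighborFinset v \ D = G.neighborFinset v := by
        apply Finset.Subset.antisymm sdiff_subset
        intro x hxN
        have hadjx : G.Adj v x := (G.mem_neighborFinset v x).mp hxN
        obtain ⟨hx2, hxlf⟩ := hnbrFp v hvFp x hadjx
        have hxJ : x ∉ J := fun hxJ => hJind v hvJ x hxJ hadjx
        exact mem_sdiff.mpr ⟨hxN, hfree_notD x hx2 hxlf hxJ⟩
      rw [hndisj, SimpleGraph.card_neighborFinset_eq_degree]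
      exact h2v
  -- D is not all of V
  have hwit : ∃ x, x ∉ D := by
    by_cases hc0 : (leafNbrs G v0).card = 0
    · have hlv0 : leafNbrs G v0 = ∅ := Finset.card_eq_zero.mp hc0
      by_cases hv0J : v0 ∈ J
      · have hv0Fp := hJP hv0J
        obtain ⟨w, hw⟩ := Finset.card_pos.mp
          (show 0 < (G.neighborFinset v0).card by
            rw [SimpleGraph.card_neighborFinset_eq_degree]; omega)
        have hadj : G.Adj v0 w := (G.mem_neighborFinset v0 w).mp hw
        obtain ⟨hw2, hwlf⟩ := hnbrFp v0 hv0Fp w hadj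
        have hwJ : w ∉ J := fun hwJ => hJind v0 hv0J w hwJ hadj
        exact ⟨w, hfree_notD w hw2 hwlf hwJ⟩
      · exact ⟨v0, hfree_notD v0 hdeg0 hlv0 hv0J⟩
    · have hc2 : 2 ≤ (leafNbrs G v0).card := by omega
      obtain ⟨l, hl⟩ := Finset.card_pos.mp (by omega : 0 < (leafNbrs G v0).card)
      obtain ⟨hladj, hldeg⟩ := (mem_leafNbrs_iff G).mp hl
      exact ⟨l, hleaf_notD l v0 hldeg hladj hdeg0 (fun hcon => hw0 hcon.1)⟩
  obtain ⟨x, hx⟩ := hwit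
  refine ⟨D, ⟨hdomD, hcertD⟩, ?_⟩
  have hss : D ⊂ univ := by
    apply Finset.ssubset_univ_iff.mpr
    intro hcon
    rw [hcon] at hx
    exact hx (mem_univ x)
  calc D.card < (univ : Finset V).card := Finset.card_lt_card hss
    _ = Fintype.card V := Finset.card_univ

end Aux

theorem gammaCer_eq_card_iff (G : SimpleGraph V) [DecidableRel G.Adj] :
    gammaCer G = Fintype.card V ↔
      ∀ v : V, G.degree v = 0 ∨ IsLeaf G v ∨ IsWeakSupport G v := by
  constructor
  · intro hγ
    by_contra hbad
    push_neg at hbad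
    obtain ⟨v, h0, h1, hw⟩ := hbad
    have hdeg2 : 2 ≤ G.degree v := by
      omega
    obtain ⟨D, hcert, hlt⟩ := exists_small_certDomSet G v hdeg2 hw
    have hle : gammaCer G ≤ D.card := Nat.sInf_le ⟨D, hcert, rfl⟩
    omega
  · intro h
    have hmem : Fintype.card V ∈ {n | ∃ D : Finset V, IsCertDomSet G D ∧ D.card = n} :=
      ⟨univ, univ_certDomSet G, card_univ⟩
    obtain ⟨D, hD, hcard⟩ := Nat.sInf_mem (⟨_, hmem⟩ : Set.Nonempty _)
    rw [gammaCer, ← hcard, certDomSet_eq_univ G h hD, card_univ]
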